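/- Let a > 0 and let X be the balanced symmetric 3-Dirac mixture taking each of the values −a, 0, a with probability 1/3. Then: (i) min_{s ∈ ℝ} Var|X − s| = Var(X)/4, attained at s = a/4 and at s = −a/4, so Φ*(X) = 1; (ii) the minimizer of s ↦ Var[(X − s)²] is s** = 0, and 4 · Var|X| / Var X = 4/3, so Φ**(X) = 4/3. -/

import Mathlib

open MeasureTheory ProbabilityTheory

private lemma int_dirac_mix (a : ℝ) (f : ℝ → ℝ) (hf : Measurable f) :
    Integrable f (ENNReal.ofReal (1 / 3) • Measure.dirac (-a) +
      ENNReal.ofReal (1 / 3) • Measure.dirac 0 +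
      ENNReal.ofReal (1 / 3) • Measure.dirac a) := by
  have hd : ∀ c : ℝ, Integrable f (Measure.dirac c) := by
    intro c
    refine ⟨hf.aestronglyMeasurable, ?_⟩
    simp [HasFiniteIntegral, lintegral_dirac]
  have hne : ENNReal.ofReal (1 / 3) ≠ ⊤ := ENNReal.ofReal_ne_top
  exact (((hd _).smul_measure hne).add_measure ((hd _).smul_measure hne)).add_measure
    ((hd _).smul_measure hne)

private lemma integ_dirac_mix (a : ℝ) (f : ℝ → ℝ) (hf : Measurable f) :
    ∫ x, f x ∂(ENNReal.ofReal (1 / 3) • Measure.dirac (-a) +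
      ENNReal.ofReal (1 / 3) • Measure.dirac 0 +
      ENNReal.ofReal (1 / 3) • Measure.dirac a) = (f (-a) + f 0 + f a) / 3 := by
  have hd : ∀ c : ℝ, Integrable f (Measure.dirac c) := by
    intro c
    refine ⟨hf.aestronglyMeasurable, ?_⟩
    simp [HasFiniteIntegral, lintegral_dirac]
  have hne : ENNReal.ofReal (1 / 3) ≠ ⊤ := ENNReal.ofReal_ne_top
  rw [integral_add_measure, integral_add_measure, integral_smul_measure,
    integral_smul_measure, integral_smul_measure, integral_dirac, integral_dirac,
    integral_dirac]
  · rw [ENNReal.toReal_ofReal (by norm_num)]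
    simp only [smul_eq_mul]; ring
  · exact (hd _).smul_measure hne
  · exact (hd _).smul_measure hne
  · exact ((hd _).smul_measure hne).add_measure ((hd _).smul_measure hne)
  · exact (hd _).smul_measure hne

/-- Let `a > 0` and let `X` be the balanced symmetric 3-Dirac mixture taking
each of the values `-a`, `0`, `a` with probability `1/3`. Then:
(i) `min_{s ∈ ℝ} Var |X - s| = Var X / 4`, attained at `s = a/4` and at `s = -a/4`, so that
`Φ⋆(X) = 4 · min_s Var |X - s| / Var X = 1`;
(ii) the (unique) minimizer of `s ↦ Var ((X - s)²)` is `s⋆⋆ = 0`, and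
`4 · Var |X| / Var X = 4/3`, so `Φ⋆⋆(X) = 4/3`. -/
theorem stmt_13 (a : ℝ) (ha : 0 < a)
    (P : Measure ℝ)
    (hP : P = ENNReal.ofReal (1 / 3) • Measure.dirac (-a) +
      ENNReal.ofReal (1 / 3) • Measure.dirac 0 +
      ENNReal.ofReal (1 / 3) • Measure.dirac a) :
    (∀ s : ℝ, variance (fun x => x) P / 4 ≤ variance (fun x => |x - s|) P) ∧
    variance (fun x => |x - a / 4|) P = variance (fun x => x) P / 4 ∧
    variance (fun x => |x - (-(a / 4))|) P = variance (fun x => x) P / 4 ∧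
    4 * (⨅ s : ℝ, variance (fun x => |x - s|) P) / variance (fun x => x) P = 1 ∧
    (∀ s : ℝ, s ≠ 0 →
      variance (fun x => x ^ 2) P < variance (fun x => (x - s) ^ 2) P) ∧
    4 * variance (fun x => |x|) P / variance (fun x => x) P = 4 / 3 := by
  subst hP
  set P : Measure ℝ := ENNReal.ofReal (1 / 3) • Measure.dirac (-a) +
      ENNReal.ofReal (1 / 3) • Measure.dirac 0 +
      ENNReal.ofReal (1 / 3) • Measure.dirac a with hPdef
  have hprob : IsProbabilityMeasure P := by
    constructor
    simp only [hPdef, Measure.add_apply, Measure.smul_apply, Measure.dirac_apply' _ MeasurableSet.univ,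
      Set.indicator_univ, smul_eq_mul, mul_one, Set.mem_univ, Pi.one_apply]
    rw [← ENNReal.ofReal_add (by norm_num) (by norm_num),
      ← ENNReal.ofReal_add (by norm_num) (by norm_num)]
    norm_num
  have hvar : ∀ f : ℝ → ℝ, Measurable f → variance f P =
      (f (-a) ^ 2 + f 0 ^ 2 + f a ^ 2) / 3 - ((f (-a) + f 0 + f a) / 3) ^ 2 := by
    intro f hf
    have hmem : MemLp f 2 P := by
      rw [memLp_two_iff_integrable_sq hf.aestronglyMeasurable]
      exact int_dirac_mix a _ (hf.pow_const 2)
    rw [variance_eq_sub hmem]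
    have h1 : ∫ x, (f ^ 2) x ∂P = (f (-a) ^ 2 + f 0 ^ 2 + f a ^ 2) / 3 := by
      have := integ_dirac_mix a (fun x => f x ^ 2) (hf.pow_const 2)
      simp only [Pi.pow_apply]
      exact this
    have h2 : ∫ x, f x ∂P = (f (-a) + f 0 + f a) / 3 := integ_dirac_mix a f hf
    rw [h1, h2]
  have hX : variance (fun x => x) P = 2 * a ^ 2 / 3 := by
    rw [hvar (fun x => x) (by fun_prop)]; ring
  have habs : ∀ s : ℝ, variance (fun x => |x - s|) P
      = 2 * a ^ 2 / 3 + s ^ 2 - ((|a + s| + |s| + |a - s|) / 3) ^ 2 := by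
    intro s
    rw [hvar _ (by fun_prop)]
    rw [show |-a - s| = |a + s| from by rw [show -a - s = -(a + s) by ring, abs_neg],
      show |(0 : ℝ) - s| = |s| from by rw [zero_sub, abs_neg]]
    simp only [sq_abs]
    ring
  have key : ∀ s : ℝ, 2 * a ^ 2 / 3 / 4 ≤
      2 * a ^ 2 / 3 + s ^ 2 - ((|a + s| + |s| + |a - s|) / 3) ^ 2 := by
    intro s
    rcases abs_cases s with ⟨h1, h1'⟩ | ⟨h1, h1'⟩ <;>
      rcases abs_cases (a + s) with ⟨h2, h2'⟩ | ⟨h2, h2'⟩ <;>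
      rcases abs_cases (a - s) with ⟨h3, h3'⟩ | ⟨h3, h3'⟩ <;>
      rw [h1, h2, h3] <;>
      nlinarith [sq_nonneg (a - 4 * s), sq_nonneg (a + 4 * s), sq_nonneg s,
        sq_nonneg (a - s), sq_nonneg (a + s), ha, sq_nonneg a]
  have part1 : ∀ s : ℝ, variance (fun x => x) P / 4 ≤ variance (fun x => |x - s|) P := by
    intro s
    rw [hX, habs s]
    exact key s
  have eqA : variance (fun x => |x - a / 4|) P = variance (fun x => x) P / 4 := by
    rw [habs, hX, abs_of_nonneg (by linarith), abs_of_nonneg (by linarith),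
      abs_of_nonneg (by linarith)]
    ring
  have eqB : variance (fun x => |x - (-(a / 4))|) P = variance (fun x => x) P / 4 := by
    rw [habs, hX, abs_of_nonneg (by linarith), abs_of_nonpos (by linarith),
      abs_of_nonneg (by linarith)]
    ring
  have hbdd : BddBelow (Set.range fun s => variance (fun x => |x - s|) P) := by
    refine ⟨2 * a ^ 2 / 3 / 4, ?_⟩
    rintro y ⟨s, rfl⟩
    show 2 * a ^ 2 / 3 / 4 ≤ variance (fun x => |x - s|) P
    rw [habs s]; exact key s
  have hinf : (⨅ s : ℝ, variance (fun x => |x - s|) P) = 2 * a ^ 2 / 3 / 4 := by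
    apply le_antisymm
    · refine le_trans (ciInf_le hbdd (a / 4)) ?_
      rw [eqA, hX]
    · refine le_ciInf fun s => ?_
      show 2 * a ^ 2 / 3 / 4 ≤ variance (fun x => |x - s|) P
      rw [habs s]; exact key s
  have h2 : variance (fun x => x ^ 2) P = 2 * a ^ 4 / 9 := by
    rw [hvar _ (by fun_prop)]; ring
  have h3 : ∀ s : ℝ, variance (fun x => (x - s) ^ 2) P = (2 * a ^ 4 + 24 * a ^ 2 * s ^ 2) / 9 := by
    intro s
    rw [hvar _ (by fun_prop)]; ring
  have h4 : variance (fun x => |x|) P = 2 * a ^ 2 / 9 := by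
    rw [hvar _ (by fun_prop)]
    simp only [abs_neg, abs_zero, abs_of_nonneg ha.le]
    ring
  refine ⟨part1, eqA, eqB, ?_, ?_, ?_⟩
  · rw [hinf, hX, div_eq_one_iff_eq (by positivity)]
    ring
  · intro s hs
    rw [h2, h3 s]
    have hs2 : 0 < s ^ 2 := by positivity
    have ha2 : 0 < a ^ 2 := by positivity
    nlinarith
  · rw [h4, hX, div_eq_div_iff (by positivity) (by norm_num)]
    ring
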